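/- Let d ∈ (0,1), α > −d, k ≥ 1, B a nonnegative integer, and a > d a real number. Then ∑_{b=1}^{∞} ( (α/d + B)_{(b)} / ( (a+α)/d + B )_{(b)} ) converges and equals (α + dB)/(a − d). -/

import Mathlib

open MeasureTheory Finset

/-- Rising factorial `(x)_{(n)} = ∏_{j=0}^{n-1} (x+j)`. -/
noncomputable def risingFactorial (x : ℝ) (n : ℕ) : ℝ := ∏ j ∈ Finset.range n, (x + j)

/-- Beta function `B(a,b) = Γ(a)Γ(b)/Γ(a+b)`. -/
noncomputable def betaFn (a b : ℝ) : ℝ := Real.Gamma a * Real.Gamma b / Real.Gamma (a + b)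

/-- The partition of `{1,…,n}` induced by an allocation vector `z ∈ (ℕ₊)ⁿ`:
its blocks are the nonempty level sets `{i : z_i = j}`. -/
def Cz {n : ℕ} (z : Fin n → ℕ+) : Finset (Finset (Fin n)) :=
  Finset.image (fun i => Finset.univ.filter fun i' => z i' = z i) Finset.univ

/-- `m(z) = max {z₁,…,zₙ}`. -/
def mz {n : ℕ} (z : Fin n → ℕ+) : ℕ := Finset.univ.sup fun i => (z i : ℕ)

/-- `g_j(z) = #{i : z_i ≥ j}`. -/
def gz {n : ℕ} (z : Fin n → ℕ+) (j : ℕ) : ℕ :=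
  (Finset.univ.filter fun i => j ≤ (z i : ℕ)).card

/-- Access the `j`-th coordinate (1-indexed) of a vector `v : Fin m → ℝ`. -/
noncomputable def stk {m : ℕ} (v : Fin m → ℝ) (j : ℕ) : ℝ :=
  if h : j - 1 < m then v ⟨j - 1, h⟩ else 0

/-- `C` is a partition of `{1,…,n}`: all blocks are nonempty and every element
belongs to exactly one block. -/
def IsPartition {n : ℕ} (C : Finset (Finset (Fin n))) : Prop :=
  (∀ c ∈ C, c.Nonempty) ∧ ∀ i : Fin n, ∃! c, c ∈ C ∧ i ∈ c

open Filter Topology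
lemma aux_prod_telescope (c : ℝ) (hc : 0 < c) (n : ℕ) :
    ∏ j ∈ Finset.range n, (c + j) / (c + j + 1) = c / (c + n) := by
  induction n with
  | zero => simp [div_self hc.ne']
  | succ n ih =>
      rw [Finset.prod_range_succ, ih]
      push_cast
      rw [div_mul_div_comm]
      rw [div_eq_div_iff (by positivity) (by positivity)]
      ring

lemma aux_factor_le (A : ℝ) (hA : 0 < A) (δ ε : ℝ) (hε : 0 < ε) (hε1 : ε ≤ 1)
    (hεδ : ε ≤ δ) : A / (A + δ) ≤ (A / (A + 1)) ^ ε := by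
  have h0 : A / (A + δ) ≤ A / (A + ε) := by
    apply div_le_div_of_nonneg_left hA.le (by linarith) (by linarith)
  refine h0.trans ?_
  have hs : (-1:ℝ) ≤ 1 / A := by
    have : (0:ℝ) ≤ 1/A := by positivity
    linarith
  have hb := rpow_one_add_le_one_add_mul_self hs hε.le hε1
  have h1A : (0:ℝ) < 1 + 1 / A := by positivity
  have key : ((1 + 1/A) ^ ε)⁻¹ ≥ (1 + ε * (1/A))⁻¹ := by
    apply inv_anti₀ (by positivity) hb
  have e1 : (1 + 1/A)⁻¹ = A / (A + 1) := by field_simp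
  have e2 : (1 + ε * (1/A))⁻¹ = A / (A + ε) := by
    rw [eq_div_iff (by positivity)]
    field_simp
  calc A / (A + ε) = (1 + ε * (1/A))⁻¹ := e2.symm
    _ ≤ ((1 + 1/A) ^ ε)⁻¹ := key
    _ = ((1 + 1/A)⁻¹) ^ ε := by rw [← Real.inv_rpow h1A.le]
    _ = (A / (A + 1)) ^ ε := by rw [e1]


/-- Initialization of the backward induction: for `d ∈ (0,1)`, `α > -d`,
`k ≥ 1`, a nonnegative integer `B` and a real `a > d`,
`∑_{b=1}^∞ (α/d + B)_{(b)} / ((a+α)/d + B)_{(b)}` converges and equals `(α + dB)/(a - d)`. -/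
theorem sum_risingFactorial_ratio_init (d α : ℝ) (hd : d ∈ Set.Ioo (0 : ℝ) 1)
    (hα : -d < α) (k : ℕ) (hk : 1 ≤ k) (B : ℕ) (a : ℝ) (ha : d < a) :
    HasSum
      (fun b : ℕ+ =>
        risingFactorial (α / d + (B : ℝ)) (b : ℕ) /
          risingFactorial ((a + α) / d + (B : ℝ)) (b : ℕ))
      ((α + d * (B : ℝ)) / (a - d)) := by
  obtain ⟨hd0, hd1⟩ := hd
  set x : ℝ := α / d + B with hxdef
  set y : ℝ := (a + α) / d + B with hydef
  have hB : (0:ℝ) ≤ B := Nat.cast_nonneg B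
  have hαd : (-1 : ℝ) < α / d := by
    rw [lt_div_iff₀ hd0]; linarith
  have hx : (-1:ℝ) < x := by simp only [hxdef]; linarith
  have had : (1:ℝ) < a / d := (one_lt_div hd0).2 ha
  set δ : ℝ := a / d - 1 with hδdef
  have hδ : 0 < δ := by simp only [hδdef]; linarith
  have hyx : y = x + 1 + δ := by
    simp only [hydef, hxdef, hδdef, add_div]
    ring
  -- positivity facts
  have hxj : ∀ j : ℕ, (0:ℝ) < x + 1 + j := fun j => by
    have : (0:ℝ) ≤ (j:ℝ) := Nat.cast_nonneg j
    linarith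
  have hyj : ∀ j : ℕ, (0:ℝ) < y + j := fun j => by
    have := hxj j; rw [hyx]; linarith
  have hRFy : ∀ n : ℕ, 0 < risingFactorial y n := fun n =>
    Finset.prod_pos fun j _ => hyj j
  have hRFx : ∀ n : ℕ, risingFactorial x (n+1) = x * ∏ j ∈ range n, (x + 1 + j) := by
    intro n
    rw [risingFactorial, Finset.prod_range_succ']
    push_cast
    rw [add_zero, mul_comm]
    congr 1
    exact Finset.prod_congr rfl fun j _ => by ring
  have hRFxnn : ∀ n : ℕ, 0 ≤ ∏ j ∈ range n, (x + 1 + (j:ℝ)) := fun n =>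
    Finset.prod_nonneg fun j _ => (hxj j).le
  -- the telescoping sequence
  set U : ℕ → ℝ := fun n => risingFactorial x (n+1) / risingFactorial y n with hUdef
  have hstep : ∀ n : ℕ,
      risingFactorial x (n+1) / risingFactorial y (n+1) = δ⁻¹ * (U n - U (n+1)) := by
    intro n
    have e1 : risingFactorial x (n+2) = risingFactorial x (n+1) * (x + (n+1)) := by
      rw [risingFactorial, risingFactorial, Finset.prod_range_succ]; push_cast; ring
    have e2 : risingFactorial y (n+1) = risingFactorial y n * (y + n) := by
      rw [risingFactorial, risingFactorial, Finset.prod_range_succ]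
    have h1 := (hRFy n).ne'
    have h2 := (hyj n).ne'
    have hy' : y + (n:ℝ) = (x + ((n:ℝ) + 1)) + δ := by rw [hyx]; ring
    simp only [hUdef, e1, e2]
    push_cast
    rw [hy']
    have h2' : x + ((n:ℝ)+1) + δ ≠ 0 := by rw [← hy']; exact h2
    field_simp
    ring
  -- partial sums
  set f : ℕ → ℝ := fun n => risingFactorial x (n+1) / risingFactorial y (n+1) with hfdef
  have hpartial : ∀ n : ℕ, ∑ i ∈ range n, f i = δ⁻¹ * (x - U n) := by
    intro n
    have : ∑ i ∈ range n, f i = δ⁻¹ * ∑ i ∈ range n, (U i - U (i+1)) := by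
      rw [Finset.mul_sum]
      exact Finset.sum_congr rfl fun i _ => hstep i
    rw [this, Finset.sum_range_sub']
    congr 2
    simp [hUdef, risingFactorial]
  -- U tends to zero
  set ε : ℝ := min δ 1 with hεdef
  have hε : 0 < ε := lt_min hδ one_pos
  have hε1 : ε ≤ 1 := min_le_right _ _
  have hεδ : ε ≤ δ := min_le_left _ _
  set P : ℕ → ℝ := fun n => ∏ j ∈ range n, (x + 1 + j) / (y + j) with hPdef
  have hUP : ∀ n : ℕ, U n = x * P n := by
    intro n
    simp only [hUdef, hPdef, Finset.prod_div_distrib]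
    rw [hRFx n, risingFactorial, mul_div_assoc]
  have hPnn : ∀ n : ℕ, 0 ≤ P n := fun n =>
    Finset.prod_nonneg fun j _ => div_nonneg (hxj j).le (hyj j).le
  have hPle : ∀ n : ℕ, P n ≤ ((x+1) / (x+1+n)) ^ ε := by
    intro n
    have step1 : P n ≤ ∏ j ∈ range n, ((x+1+j) / (x+1+j+1)) ^ ε := by
      apply Finset.prod_le_prod (fun j _ => div_nonneg (hxj j).le (hyj j).le)
      intro j _
      have := aux_factor_le (x+1+j) (hxj j) δ ε hε hε1 hεδ
      have hyj' : y + (j:ℝ) = (x+1+j) + δ := by rw [hyx]; ring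
      rw [hyj']
      exact this
    refine step1.trans ?_
    have h := Real.finset_prod_rpow (range n) (fun j : ℕ => (x+1+j)/(x+1+(j:ℝ)+1))
      (fun j _ => div_nonneg (hxj j).le (by have := hxj j; linarith)) ε
    rw [h, aux_prod_telescope (x+1) (by linarith) n]
  have hbound : Tendsto (fun n : ℕ => ((x+1) / (x+1+n)) ^ ε) atTop (𝓝 0) := by
    have h1 : Tendsto (fun n : ℕ => (x+1) / (x+1+n)) atTop (𝓝 0) := by
      apply Tendsto.div_atTop tendsto_const_nhds
      apply tendsto_atTop_add_const_left
      exact tendsto_natCast_atTop_atTop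
    have h2 : Tendsto (fun t : ℝ => t ^ ε) (𝓝 0) (𝓝 0) := by
      have := (Real.continuousAt_rpow_const 0 ε (Or.inr hε.le)).tendsto
      rwa [Real.zero_rpow hε.ne'] at this
    exact h2.comp h1
  have hP0 : Tendsto P atTop (𝓝 0) := squeeze_zero hPnn hPle hbound
  have hU0 : Tendsto U atTop (𝓝 0) := by
    have := hP0.const_mul x
    rw [mul_zero] at this
    exact this.congr fun n => (hUP n).symm
  have hsumlim : Tendsto (fun n : ℕ => ∑ i ∈ range n, f i) atTop (𝓝 (δ⁻¹ * x)) := by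
    have : Tendsto (fun n : ℕ => δ⁻¹ * (x - U n)) atTop (𝓝 (δ⁻¹ * (x - 0))) :=
      (tendsto_const_nhds.sub hU0).const_mul _
    rw [sub_zero] at this
    exact this.congr fun n => (hpartial n).symm
  -- HasSum over ℕ
  have hfx : ∀ n : ℕ, f n = x * (∏ j ∈ range n, (x + 1 + (j:ℝ))) / risingFactorial y (n+1) := by
    intro n; rw [hfdef]; simp only; rw [hRFx n]
  have hhs : HasSum f (δ⁻¹ * x) := by
    rcases le_or_gt 0 x with hx0 | hx0
    · refine (hasSum_iff_tendsto_nat_of_nonneg (fun n => ?_) _).2 hsumlim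
      rw [hfx n]
      exact div_nonneg (mul_nonneg hx0 (hRFxnn n)) (hRFy (n+1)).le
    · have hneg : HasSum (fun n => -f n) (-(δ⁻¹ * x)) := by
        refine (hasSum_iff_tendsto_nat_of_nonneg (fun n => ?_) _).2 ?_
        · rw [hfx n]
          rw [neg_nonneg]
          exact div_nonpos_of_nonpos_of_nonneg
            (mul_nonpos_of_nonpos_of_nonneg hx0.le (hRFxnn n)) (hRFy (n+1)).le
        · simpa [Finset.sum_neg_distrib] using hsumlim.neg
      simpa using hneg.neg
  -- transfer to ℕ+
  have hval : δ⁻¹ * x = (α + d * (B:ℝ)) / (a - d) := by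
    have hd' : d ≠ 0 := hd0.ne'
    have had' : a - d ≠ 0 := by intro h; linarith [sub_eq_zero.1 h]
    have hδ' : a / d - 1 ≠ 0 := by rw [← hδdef]; exact hδ.ne'
    rw [hxdef, hδdef]
    field_simp
  rw [← hval]
  refine (Equiv.hasSum_iff (Equiv.pnatEquivNat.symm)).1 ?_
  have hcomp : ((fun b : ℕ+ =>
      risingFactorial x (b:ℕ) / risingFactorial y (b:ℕ)) ∘ Equiv.pnatEquivNat.symm) = f := by
    funext n
    simp [hfdef, Function.comp, Equiv.pnatEquivNat, Nat.succPNat]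
  rw [hcomp]
  exact hhs
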